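/- Under the same assumptions (Θ(t) ~ ∑_{n≥0} A_{i_n} t^{i_n} as t → 0⁺), for every nonnegative integer n that appears as an exponent (i.e. the coefficient A_n is defined, taken as 0 if n is not among the i_k), the meromorphic continuation of ζ_Λ satisfies ζ_Λ(-n) = (-1)^n · n! · A_n. -/

import Mathlib

open Real Filter Asymptotics Topology

private lemma analyticAt_cprod (c : ℕ → ℂ) (F : Finset ℕ) (z : ℂ) :
    AnalyticAt ℂ (fun s : ℂ => ∏ m ∈ F, (s + c m)) z := by
  classical
  induction F using Finset.induction_on with
  | empty => simpa using analyticAt_const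
  | insert _ _ ha ih =>
      simp_rw [Finset.prod_insert ha]
      exact (analyticAt_id.add analyticAt_const).mul ih

private lemma analyticAt_csum {α : Type*} (g : α → ℂ → ℂ) (F : Finset α) (z : ℂ)
    (h : ∀ a ∈ F, AnalyticAt ℂ (g a) z) :
    AnalyticAt ℂ (fun s : ℂ => ∑ a ∈ F, g a s) z := by
  classical
  induction F using Finset.induction_on with
  | empty => simpa using analyticAt_const
  | @insert a Fs ha ih =>
      simp_rw [Finset.sum_insert ha]
      exact (h a (Finset.mem_insert_self _ _)).add
        (ih fun b hb => h b (Finset.mem_insert_of_mem hb))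

private lemma gamma_inv_rec (s : ℂ) :
    (Complex.Gamma s)⁻¹ = s * (Complex.Gamma (s + 1))⁻¹ := by
  by_cases hs : s = 0
  · simp [hs, Complex.Gamma_zero]
  · rw [Complex.Gamma_add_one s hs, mul_inv, ← mul_assoc, mul_inv_cancel₀ hs, one_mul]

private lemma gamma_inv_fact (M : ℕ) (s : ℂ) :
    (Complex.Gamma s)⁻¹ = (∏ j ∈ Finset.range M, (s + j)) * (Complex.Gamma (s + M))⁻¹ := by
  induction M with
  | zero => simp
  | succ M ih =>
      have h1 : s + ((M + 1 : ℕ) : ℂ) = s + M + 1 := by push_cast; ring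
      rw [ih, gamma_inv_rec (s + M), Finset.prod_range_succ, h1]
      ring

private lemma prod_neg_factorial (n : ℕ) :
    (∏ j ∈ Finset.range n, ((-(n : ℂ)) + j)) = (-1) ^ n * n.factorial := by
  have h1 : ∀ j ∈ Finset.range n, (-(n : ℂ)) + j = -(((n - j : ℕ) : ℂ)) := by
    intro j hj
    have hle := (Finset.mem_range.mp hj).le
    push_cast [Nat.cast_sub hle]
    ring
  rw [Finset.prod_congr rfl h1]
  have hneg : ∀ j ∈ Finset.range n, -(((n - j : ℕ) : ℂ)) = (-1) * ((n - j : ℕ) : ℂ) :=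
    fun j _ => by ring
  rw [Finset.prod_congr rfl hneg, Finset.prod_mul_distrib, Finset.prod_const,
    Finset.card_range]
  congr 1
  have h2 : ∀ j ∈ Finset.range n, ((n - j : ℕ) : ℂ) = (((n - 1 - j) + 1 : ℕ) : ℂ) := by
    intro j hj
    have := Finset.mem_range.mp hj
    congr 1
    omega
  rw [Finset.prod_congr rfl h2]
  have h3 : (∏ j ∈ Finset.range n, ((((n - 1 - j) + 1 : ℕ)) : ℂ))
      = ((∏ j ∈ Finset.range n, ((n - 1 - j) + 1) : ℕ) : ℂ) := by
    rw [Nat.cast_prod]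
  rw [h3, Finset.prod_range_reflect (fun j => j + 1) n,
    Finset.prod_range_add_one_eq_factorial]

private lemma preconn_aux (c d : ℝ) (D : Set ℂ) (hD : ∀ z ∈ D, z.im = 0 ∧ z.re ≤ d) :
    IsPreconnected ({s : ℂ | c < s.re} \ D) := by
  classical
  set U1 : Set ℂ := {s : ℂ | c < s.re ∧ 0 < s.im} with hU1
  set U2 : Set ℂ := {s : ℂ | c < s.re ∧ s.im < 0} with hU2
  set U3 : Set ℂ := {s : ℂ | max c d < s.re} with hU3
  have hU1c : Convex ℝ U1 := (convex_halfSpace_re_gt c).inter (convex_halfSpace_im_gt 0)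
  have hU2c : Convex ℝ U2 := (convex_halfSpace_re_gt c).inter (convex_halfSpace_im_lt 0)
  have hU3c : Convex ℝ U3 := convex_halfSpace_re_gt _
  set W : Set ℂ := U1 ∪ U3 ∪ U2 with hWdef
  have hre1 : (((max c d + 1 : ℝ) : ℂ) + Complex.I).re = max c d + 1 := by
    simp [Complex.add_re]
  have him1 : (((max c d + 1 : ℝ) : ℂ) + Complex.I).im = 1 := by
    simp [Complex.add_im]
  have hre2 : (((max c d + 1 : ℝ) : ℂ) - Complex.I).re = max c d + 1 := by
    simp [Complex.sub_re]
  have him2 : (((max c d + 1 : ℝ) : ℂ) - Complex.I).im = -1 := by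
    simp [Complex.sub_im]
  have hcle : c < max c d + 1 := by have := le_max_left c d; linarith
  have hx0W : ((max c d + 1 : ℝ) : ℂ) + Complex.I ∈ W := by
    apply Set.mem_union_left
    apply Set.mem_union_left
    exact ⟨by rw [hre1]; exact hcle, by rw [him1]; norm_num⟩
  have hWpre : IsPreconnected W := by
    have h13 : IsPreconnected (U1 ∪ U3) := by
      apply IsPreconnected.union' _ hU1c.isPreconnected hU3c.isPreconnected
      refine ⟨((max c d + 1 : ℝ) : ℂ) + Complex.I,
        ⟨by rw [hre1]; exact hcle, by rw [him1]; norm_num⟩,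
        by show max c d < (((max c d + 1 : ℝ) : ℂ) + Complex.I).re
           rw [hre1]; exact lt_add_one _⟩
    apply IsPreconnected.union' _ h13 hU2c.isPreconnected
    refine ⟨((max c d + 1 : ℝ) : ℂ) - Complex.I, ?_, ?_⟩
    · refine Set.mem_union_right _ ?_
      show max c d < (((max c d + 1 : ℝ) : ℂ) - Complex.I).re
      rw [hre2]; exact lt_add_one _
    · exact ⟨by rw [hre2]; exact hcle, by rw [him2]; norm_num⟩
  have hWsub : W ⊆ {s : ℂ | c < s.re} \ D := by
    intro s hs
    have hsc : c < s.re ∧ (s.im ≠ 0 ∨ d < s.re) := by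
      rcases hs with (h | h) | h
      · exact ⟨h.1, Or.inl (ne_of_gt h.2)⟩
      · exact ⟨lt_of_le_of_lt (le_max_left c d) h, Or.inr (lt_of_le_of_lt (le_max_right c d) h)⟩
      · exact ⟨h.1, Or.inl (ne_of_lt h.2)⟩
    refine ⟨hsc.1, fun hsD => ?_⟩
    obtain ⟨him, hre⟩ := hD s hsD
    rcases hsc.2 with h | h
    · exact h him
    · exact absurd hre (not_le.mpr h)
  apply isPreconnected_of_forall (((max c d + 1 : ℝ) : ℂ) + Complex.I)
  intro y hy
  by_cases hyW : y ∈ W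
  · exact ⟨W, hWsub, hx0W, hyW, hWpre⟩
  · have hyim : y.im = 0 := by
      by_contra him
      apply hyW
      rcases lt_or_gt_of_ne him with h | h
      · exact Set.mem_union_right _ ⟨hy.1, h⟩
      · exact Set.mem_union_left _ (Set.mem_union_left _ ⟨hy.1, h⟩)
    refine ⟨W ∪ segment ℝ y (y + Complex.I), ?_, Or.inl hx0W,
      Or.inr (left_mem_segment ℝ _ _), ?_⟩
    · apply Set.union_subset hWsub
      intro z hz
      rw [segment_eq_image'] at hz
      obtain ⟨u, hu, rfl⟩ := hz
      simp only [add_sub_cancel_left] at *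
      have hre : (y + u • Complex.I).re = y.re := by
        simp [Complex.add_re, Complex.real_smul, Complex.mul_re]
      have him : (y + u • Complex.I).im = u := by
        simp [Complex.add_im, Complex.real_smul, Complex.mul_im, hyim]
      refine ⟨?_, fun hzD => ?_⟩
      · show c < (y + u • Complex.I).re
        rw [hre]; exact hy.1
      obtain ⟨him0, _⟩ := hD _ hzD
      rw [him] at him0
      subst him0
      simp only [zero_smul, add_zero] at hzD
      exact hy.2 hzD
    · apply IsPreconnected.union' _ hWpre (convex_segment _ _).isPreconnected
      refine ⟨y + Complex.I, ?_, right_mem_segment ℝ _ _⟩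
      apply Set.mem_union_left
      apply Set.mem_union_left
      refine ⟨?_, ?_⟩
      · show c < (y + Complex.I).re
        simpa [Complex.add_re] using hy.1
      · show (0:ℝ) < (y + Complex.I).im
        simp [Complex.add_im, hyim]

theorem zeta_lambda_special_values (Λ : ℕ → ℕ) (hpos : ∀ k, 1 ≤ Λ k)
    (hsum : ∀ t : ℝ, 0 < t → Summable fun k => Real.exp (-(Λ k : ℝ) * t))
    (i : ℕ → ℝ) (A : ℕ → ℝ) (hmono : StrictMono i) (hi0 : i 0 < 0)
    (hitop : Tendsto i atTop atTop)
    (hasymp : ∀ N : ℕ,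
      (fun t : ℝ => (∑' k, Real.exp (-(Λ k : ℝ) * t)) -
          ∑ n ∈ Finset.range N, A n * t ^ (i n))
        =O[nhdsWithin 0 (Set.Ioi 0)] fun t : ℝ => t ^ (i N))
    (Z : ℂ → ℂ)
    (hZ : ∀ s : ℂ, -(i 0) < s.re →
      Z s = (Complex.Gamma s)⁻¹ *
        ∫ t in Set.Ioi (0 : ℝ),
          (t : ℂ) ^ (s - 1) * ((∑' k, Real.exp (-(Λ k : ℝ) * t) : ℝ) : ℂ))
    (hZanalytic : ∀ s : ℂ, (∀ n, s ≠ (-(i n) : ℝ)) → AnalyticAt ℂ Z s)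
    (hZreg : ∀ n : ℕ, AnalyticAt ℂ Z (-(n : ℂ))) :
    ∀ n : ℕ,
      (∀ k : ℕ, i k = (n : ℝ) → Z (-(n : ℂ)) = (-1) ^ n * (n.factorial : ℂ) * (A k : ℂ)) ∧
      ((∀ k : ℕ, i k ≠ (n : ℝ)) → Z (-(n : ℂ)) = 0) := by
  classical
  intro n
  obtain ⟨N, hN⟩ : ∃ N, (n : ℝ) < i N := (hitop.eventually_gt_atTop _).exists
  have hi0N : i 0 < i N := by
    have : (0:ℝ) ≤ n := Nat.cast_nonneg n
    linarith
  set Θ : ℝ → ℝ := fun t => ∑' k, Real.exp (-(Λ k : ℝ) * t) with hΘdef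
  set Θc : ℝ → ℂ := fun t => ((Θ t : ℝ) : ℂ) with hΘcdef
  -- Basic positivity and continuity facts about Θ
  have hΘnonneg : ∀ t, 0 ≤ Θ t := fun t => tsum_nonneg fun k => (Real.exp_pos _).le
  have hΘcontAt : ∀ t : ℝ, 0 < t → ContinuousAt Θ t := by
    intro t ht
    have h2 : 0 < t / 2 := by linarith
    have hcont : ContinuousOn Θ (Set.Ici (t / 2)) := by
      apply continuousOn_tsum (u := fun k => Real.exp (-(Λ k : ℝ) * (t / 2)))
      · exact fun k => (Real.continuous_exp.comp (by continuity)).continuousOn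
      · exact hsum _ h2
      · intro k x hx
        rw [Real.norm_eq_abs, abs_of_pos (Real.exp_pos _)]
        apply Real.exp_le_exp.mpr
        have hk : (0:ℝ) < (Λ k : ℝ) := by
          have := hpos k; positivity
        have hx' : t / 2 ≤ x := hx
        nlinarith
    exact hcont.continuousAt (Ici_mem_nhds (by linarith))
  have hΘdecay : ∀ t : ℝ, 1 ≤ t → Θ t ≤ Θ 1 * Real.exp (1 - t) := by
    intro t ht
    have h1 : ∀ k, Real.exp (-(Λ k : ℝ) * t) ≤ Real.exp (-(Λ k : ℝ) * 1) * Real.exp (1 - t) := by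
      intro k
      rw [← Real.exp_add]
      apply Real.exp_le_exp.mpr
      have hk : (1:ℝ) ≤ (Λ k : ℝ) := by exact_mod_cast hpos k
      nlinarith
    calc Θ t ≤ ∑' k, Real.exp (-(Λ k : ℝ) * 1) * Real.exp (1 - t) :=
          Summable.tsum_le_tsum h1 (hsum t (by linarith)) ((hsum 1 one_pos).mul_right _)
      _ = Θ 1 * Real.exp (1 - t) := by
          rw [tsum_mul_right]
  -- transfer of big-O facts through the coercion ℝ → ℂ
  have hofReal : ∀ {l : Filter ℝ} {u v : ℝ → ℝ}, u =O[l] v →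
      (fun t => ((u t : ℝ) : ℂ)) =O[l] v := fun {l} {u} {v} h =>
    (Asymptotics.isBigO_of_le l fun x => by rw [Complex.norm_real]).trans h
  have hΘtop : Θc =O[atTop] fun t => Real.exp (-1 * t) := by
    rw [hΘcdef]
    apply hofReal
    rw [isBigO_iff]
    refine ⟨Θ 1 * Real.exp 1, ?_⟩
    filter_upwards [eventually_ge_atTop (1:ℝ)] with t ht
    rw [Real.norm_eq_abs, abs_of_nonneg (hΘnonneg t), Real.norm_eq_abs,
      abs_of_pos (Real.exp_pos _)]
    calc Θ t ≤ Θ 1 * Real.exp (1 - t) := hΘdecay t ht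
      _ = Θ 1 * Real.exp 1 * Real.exp (-1 * t) := by
          rw [mul_assoc, ← Real.exp_add]
          ring_nf
  have hΘbot : Θc =O[𝓝[>] (0:ℝ)] fun t => t ^ (i 0) := by
    rw [hΘcdef]
    apply hofReal
    have h := hasymp 0
    simp only [Finset.range_zero, Finset.sum_empty, sub_zero] at h
    exact h
  set p : ℕ → ℝ → ℂ :=
    fun m => Set.indicator (Set.Ioc 0 1) (fun t => (t : ℂ) ^ ((i m : ℝ) : ℂ)) with hpdef
  set f : ℝ → ℂ := fun t => Θc t - ∑ m ∈ Finset.range N, (A m : ℂ) * p m t with hfdef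
  have hfbot : f =O[𝓝[>] (0:ℝ)] fun t => t ^ (i N) := by
    have hev : (fun t : ℝ =>
        (((Θ t - ∑ m ∈ Finset.range N, A m * t ^ (i m) : ℝ)) : ℂ)) =ᶠ[𝓝[>] (0:ℝ)] f := by
      filter_upwards [Ioc_mem_nhdsGT (zero_lt_one)] with t ht
      rw [hfdef]
      simp only [hpdef, hΘcdef, Set.indicator_of_mem ht]
      push_cast
      congr 1
      apply Finset.sum_congr rfl
      intro m _
      rw [Complex.ofReal_cpow ht.1.le]
    exact ((hofReal (hasymp N)).congr' hev EventuallyEq.rfl)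
  have hftop : f =O[atTop] fun t => Real.exp (-1 * t) := by
    have hev : Θc =ᶠ[atTop] f := by
      filter_upwards [eventually_gt_atTop (1:ℝ)] with t ht
      have hpt : ∀ m, p m t = 0 := fun m =>
        Set.indicator_of_notMem (fun h => absurd h.2 (not_le.mpr ht)) _
      rw [hfdef]
      simp [hpt]
    exact hΘtop.congr' hev EventuallyEq.rfl
  -- local integrability
  have hΘcLI : MeasureTheory.LocallyIntegrableOn Θc (Set.Ioi 0) := by
    apply ContinuousOn.locallyIntegrableOn _ measurableSet_Ioi
    exact Complex.continuous_ofReal.comp_continuousOn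
      (fun t ht => (hΘcontAt t ht).continuousWithinAt)
  have hpLI : ∀ m, MeasureTheory.LocallyIntegrableOn (p m) (Set.Ioi 0) := by
    intro m
    rw [MeasureTheory.locallyIntegrableOn_iff isOpen_Ioi.isLocallyClosed]
    intro K hK hKc
    have hcont : ContinuousOn (fun t : ℝ => (t : ℂ) ^ ((i m : ℝ) : ℂ)) K := fun x hx =>
      (Complex.continuousAt_ofReal_cpow_const x _ (Or.inr (ne_of_gt (hK hx)))).continuousWithinAt
    exact (hcont.integrableOn_compact hKc).indicator measurableSet_Ioc
  have hfLI : MeasureTheory.LocallyIntegrableOn f (Set.Ioi 0) := by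
    rw [MeasureTheory.locallyIntegrableOn_iff isOpen_Ioi.isLocallyClosed]
    intro K hK hKc
    have h1 := hΘcLI.integrableOn_compact_subset hK hKc
    have h2 : MeasureTheory.IntegrableOn
        (fun t => ∑ m ∈ Finset.range N, (A m : ℂ) * p m t) K :=
      MeasureTheory.integrable_finset_sum _ fun m _ =>
        ((hpLI m).integrableOn_compact_subset hK hKc).const_mul _
    exact h1.sub h2
  -- Mellin transform facts
  have hGdiff : ∀ s : ℂ, -(i N) < s.re → DifferentiableAt ℂ (mellin f) s := by
    intro s hs
    apply mellin_differentiableAt_of_isBigO_rpow_exp (a := 1) (b := -(i N))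
      one_pos hfLI hftop _ hs
    rw [neg_neg]
    exact hfbot
  have hfconv : ∀ s : ℂ, -(i N) < s.re → MellinConvergent f s := by
    intro s hs
    apply mellinConvergent_of_isBigO_rpow_exp (a := 1) (b := -(i N))
      one_pos hfLI hftop _ hs
    rw [neg_neg]
    exact hfbot
  have hpm : ∀ m, ∀ s : ℂ, -(i 0) < s.re →
      HasMellin (p m) s (1 / (s + ((i m : ℝ) : ℂ))) := by
    intro m s hs
    have h0 : 0 < s.re + (((i m : ℝ) : ℂ)).re := by
      rw [Complex.ofReal_re]
      have := hmono.monotone (Nat.zero_le m)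
      linarith
    exact hasMellin_cpow_Ioc _ h0
  have hmell_id : ∀ s : ℂ, -(i 0) < s.re →
      mellin Θc s
        = (∑ m ∈ Finset.range N, (A m : ℂ) * (1 / (s + ((i m : ℝ) : ℂ)))) + mellin f s := by
    intro s hs
    have hsN : -(i N) < s.re := by linarith
    have hintp : ∀ m ∈ Finset.range N, MeasureTheory.IntegrableOn
        (fun t : ℝ => (A m : ℂ) * ((t : ℂ) ^ (s - 1) • p m t)) (Set.Ioi 0) :=
      fun m _ => ((hpm m s hs).1.const_mul _)
    have hintf : MeasureTheory.IntegrableOn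
        (fun t : ℝ => (t : ℂ) ^ (s - 1) • f t) (Set.Ioi 0) := hfconv s hsN
    have hpt : ∀ t : ℝ, (t : ℂ) ^ (s - 1) • Θc t =
        (t : ℂ) ^ (s - 1) • f t
          + ∑ m ∈ Finset.range N, (A m : ℂ) * ((t : ℂ) ^ (s - 1) • p m t) := by
      intro t
      have hS : ∑ m ∈ Finset.range N, (A m : ℂ) * ((t : ℂ) ^ (s - 1) * p m t)
          = (t : ℂ) ^ (s - 1) * ∑ m ∈ Finset.range N, (A m : ℂ) * p m t := by
        rw [Finset.mul_sum]
        exact Finset.sum_congr rfl fun m _ => by ring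
      simp only [smul_eq_mul, hfdef, hS]
      ring
    calc mellin Θc s
        = ∫ t in Set.Ioi (0:ℝ), ((t : ℂ) ^ (s - 1) • f t
            + ∑ m ∈ Finset.range N, (A m : ℂ) * ((t : ℂ) ^ (s - 1) • p m t)) := by
          rw [mellin]
          exact MeasureTheory.setIntegral_congr_fun measurableSet_Ioi fun t _ => hpt t
      _ = (∫ t in Set.Ioi (0:ℝ), (t : ℂ) ^ (s - 1) • f t)
            + ∫ t in Set.Ioi (0:ℝ),
                ∑ m ∈ Finset.range N, (A m : ℂ) * ((t : ℂ) ^ (s - 1) • p m t) :=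
          MeasureTheory.integral_add hintf (MeasureTheory.integrable_finset_sum _ hintp)
      _ = mellin f s
            + ∑ m ∈ Finset.range N, ∫ t in Set.Ioi (0:ℝ),
                (A m : ℂ) * ((t : ℂ) ^ (s - 1) • p m t) := by
          rw [MeasureTheory.integral_finset_sum _ hintp, mellin]
      _ = (∑ m ∈ Finset.range N, (A m : ℂ) * (1 / (s + ((i m : ℝ) : ℂ)))) + mellin f s := by
          rw [add_comm]
          congr 1
          apply Finset.sum_congr rfl
          intro m _
          rw [MeasureTheory.integral_const_mul, ← mellin, (hpm m s hs).2]
  -- the auxiliary functions for the continuation identity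
  set G : ℂ → ℂ := mellin f with hGdef
  set P : ℂ → ℂ := fun s => ∏ m ∈ Finset.range N, (s + ((i m : ℝ) : ℂ)) with hPdef
  set S1 : ℂ → ℂ := fun s => ∑ m ∈ Finset.range N, (A m : ℂ) *
      ∏ j ∈ (Finset.range N).erase m, (s + ((i j : ℝ) : ℂ)) with hS1def
  set F : ℂ → ℂ := fun s => (Complex.Gamma s)⁻¹ * (S1 s + P s * G s) with hFdef
  set E : ℂ → ℂ := fun s => P s * Z s with hEdef
  -- the identity E = F on the half-plane of convergence
  have hEF : ∀ s : ℂ, -(i 0) < s.re → E s = F s := by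
    intro s hs
    have hZs := hZ s hs
    have hφ : (∫ t in Set.Ioi (0:ℝ), (t : ℂ) ^ (s - 1) * ((∑' k, Real.exp (-(Λ k : ℝ) * t) : ℝ) : ℂ))
        = mellin Θc s := by
      rw [mellin]
      apply MeasureTheory.setIntegral_congr_fun measurableSet_Ioi
      intro t _
      simp only [smul_eq_mul, hΘcdef, hΘdef]
    have hne : ∀ m ∈ Finset.range N, s + ((i m : ℝ) : ℂ) ≠ 0 := by
      intro m _ h0
      have hre : (s + ((i m : ℝ) : ℂ)).re = 0 := by rw [h0]; rfl
      rw [Complex.add_re, Complex.ofReal_re] at hre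
      have h0m : i 0 ≤ i m := hmono.monotone (Nat.zero_le m)
      linarith
    have key : P s * mellin Θc s = S1 s + P s * G s := by
      rw [hmell_id s hs, mul_add, hGdef]
      congr 1
      rw [Finset.mul_sum, hS1def]
      apply Finset.sum_congr rfl
      intro m hm
      have hP1 : P s = (s + ((i m : ℝ) : ℂ))
          * ∏ j ∈ (Finset.range N).erase m, (s + ((i j : ℝ) : ℂ)) := by
        rw [hPdef]
        exact (Finset.mul_prod_erase _ _ hm).symm
      rw [hP1]
      calc ((s + ((i m : ℝ) : ℂ)) * ∏ j ∈ (Finset.range N).erase m, (s + ((i j : ℝ) : ℂ)))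
            * ((A m : ℂ) * (1 / (s + ((i m : ℝ) : ℂ))))
          = ((s + ((i m : ℝ) : ℂ)) * (s + ((i m : ℝ) : ℂ))⁻¹)
            * ((A m : ℂ) * ∏ j ∈ (Finset.range N).erase m, (s + ((i j : ℝ) : ℂ))) := by
            rw [one_div]; ring
        _ = (A m : ℂ) * ∏ j ∈ (Finset.range N).erase m, (s + ((i j : ℝ) : ℂ)) := by
            rw [mul_inv_cancel₀ (hne m hm), one_mul]
    simp only [hEdef, hFdef]
    rw [hZs, hφ]
    calc P s * ((Complex.Gamma s)⁻¹ * mellin Θc s)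
        = (Complex.Gamma s)⁻¹ * (P s * mellin Θc s) := by ring
      _ = (Complex.Gamma s)⁻¹ * (S1 s + P s * G s) := by rw [key]
  -- the region for analytic continuation
  set V : Set ℂ := {s : ℂ | -(i N) < s.re} \ (Set.range fun m : ℕ => ((-(i m) : ℝ) : ℂ)) with hVdef
  have hVpre : IsPreconnected V := by
    apply preconn_aux _ (-(i 0))
    rintro z ⟨m, rfl⟩
    refine ⟨by simp, ?_⟩
    simp only [Complex.ofReal_re]
    have := hmono.monotone (Nat.zero_le m)
    linarith
  have hEan : AnalyticOnNhd ℂ E V := by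
    rintro s ⟨_, hs2⟩
    apply (analyticAt_cprod _ _ _).mul
    apply hZanalytic
    intro m hm
    exact hs2 ⟨m, hm.symm⟩
  have hΓinv_an : ∀ s : ℂ, AnalyticAt ℂ (fun w => (Complex.Gamma w)⁻¹) s := fun s =>
    DifferentiableOn.analyticAt
      (Complex.differentiable_one_div_Gamma.differentiableOn) Filter.univ_mem
  have hGanAt : ∀ s : ℂ, -(i N) < s.re → AnalyticAt ℂ G s := by
    intro s hs
    have hopen : IsOpen {w : ℂ | -(i N) < w.re} := isOpen_lt continuous_const Complex.continuous_re
    exact DifferentiableOn.analyticAt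
      (fun w hw => (hGdiff w hw).differentiableWithinAt) (hopen.mem_nhds hs)
  have hS1an : ∀ s : ℂ, AnalyticAt ℂ S1 s := by
    intro s
    rw [hS1def]
    apply analyticAt_csum
    intro m _
    exact analyticAt_const.mul (analyticAt_cprod _ _ _)
  have hFan : AnalyticOnNhd ℂ F V := by
    rintro s ⟨hs1, _⟩
    exact (hΓinv_an s).mul ((hS1an s).add ((analyticAt_cprod _ _ _).mul (hGanAt s hs1)))
  -- base point for the identity theorem
  set x₀ : ℂ := ((-(i 0) + 1 : ℝ) : ℂ) with hx₀def
  have hx₀V : x₀ ∈ V := by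
    constructor
    · show -(i N) < x₀.re
      rw [hx₀def, Complex.ofReal_re]
      linarith
    · rintro ⟨m, hm⟩
      have := congrArg Complex.re hm
      rw [Complex.ofReal_re, hx₀def, Complex.ofReal_re] at this
      have h0m : i 0 ≤ i m := hmono.monotone (Nat.zero_le m)
      linarith
  have hEFev : E =ᶠ[𝓝 x₀] F := by
    have hmem : {s : ℂ | -(i 0) < s.re} ∈ 𝓝 x₀ := by
      apply (isOpen_lt continuous_const Complex.continuous_re).mem_nhds
      show -(i 0) < x₀.re
      rw [hx₀def, Complex.ofReal_re]
      linarith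
    filter_upwards [hmem] with s hs using hEF s hs
  have hEqV : Set.EqOn E F V := hEan.eqOn_of_preconnected_of_eventuallyEq hFan hVpre hx₀V hEFev
  have hnre : -(i N) < (-(n : ℂ)).re := by
    simp only [Complex.neg_re, Complex.natCast_re]
    linarith
  constructor
  · -- the case where n occurs among the exponents
    intro k hk
    have hkN : k ∈ Finset.range N := by
      rw [Finset.mem_range]
      by_contra h
      push_neg at h
      have := hmono.monotone h
      rw [hk] at this
      linarith
    set Q : ℂ → ℂ := fun s => ∏ j ∈ (Finset.range N).erase k, (s + ((i j : ℝ) : ℂ)) with hQdef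
    set ψ : ℂ → ℂ := fun s => (∏ j ∈ Finset.range n, (s + (j : ℂ)))
        * (Complex.Gamma (s + ((n + 1 : ℕ) : ℂ)))⁻¹ with hψdef
    have hψfact : ∀ s : ℂ, (Complex.Gamma s)⁻¹ = (s + n) * ψ s := by
      intro s
      rw [gamma_inv_fact (n + 1) s, Finset.prod_range_succ, hψdef]
      push_cast
      ring
    have hPQ : ∀ s : ℂ, P s = (s + n) * Q s := by
      intro s
      simp only [hPdef, hQdef]
      rw [← Finset.mul_prod_erase _ _ hkN, hk]
      push_cast
      ring
    set S2 : ℂ → ℂ := fun s => ∑ m ∈ (Finset.range N).erase k, (A m : ℂ) *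
        ∏ j ∈ ((Finset.range N).erase m).erase k, (s + ((i j : ℝ) : ℂ)) with hS2def
    have hS1eq : ∀ s : ℂ, S1 s = (A k : ℂ) * Q s + (s + n) * S2 s := by
      intro s
      simp only [hS1def, hQdef, hS2def]
      rw [← Finset.add_sum_erase _ _ hkN]
      congr 1
      rw [Finset.mul_sum]
      apply Finset.sum_congr rfl
      intro m hm
      have hmk : k ∈ (Finset.range N).erase m :=
        Finset.mem_erase.mpr ⟨(Finset.ne_of_mem_erase hm).symm, hkN⟩
      rw [← Finset.mul_prod_erase _ _ hmk, hk]
      push_cast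
      ring
    have hFfact : ∀ s : ℂ, F s
        = (s + n) * ((A k : ℂ) * ψ s * Q s + (Complex.Gamma s)⁻¹ * (S2 s + Q s * G s)) := by
      intro s
      have h1 : (Complex.Gamma s)⁻¹ * ((A k : ℂ) * Q s)
          = (s + n) * ((A k : ℂ) * ψ s * Q s) := by
        rw [hψfact s]
        ring
      have h2 : F s = (Complex.Gamma s)⁻¹ * ((A k : ℂ) * Q s)
          + (s + n) * ((Complex.Gamma s)⁻¹ * (S2 s + Q s * G s)) := by
        simp only [hFdef]
        rw [hS1eq s, hPQ s]
        ring
      rw [h2, h1]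
      ring
    have hEfact : ∀ s : ℂ, E s = (s + n) * (Q s * Z s) := by
      intro s
      simp only [hEdef]
      rw [hPQ s]
      ring
    -- analyticity of E and F at -n
    have hEan' : AnalyticAt ℂ E (-(n : ℂ)) := by
      simp only [hEdef]
      exact (analyticAt_cprod _ _ _).mul (hZreg n)
    have hFan' : AnalyticAt ℂ F (-(n : ℂ)) := by
      simp only [hFdef]
      exact (hΓinv_an _).mul ((hS1an _).add ((analyticAt_cprod _ _ _).mul (hGanAt _ hnre)))
    -- E and F agree frequently near -n
    have hfreq : ∃ᶠ s in 𝓝[≠] (-(n : ℂ)), E s = F s := by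
      have hjV : ∀ j : ℕ, (-(n : ℂ) + ((1 / (j + 1 : ℝ) : ℝ) : ℂ) * Complex.I) ∈ V := by
        intro j
        have hre : (-(n : ℂ) + ((1 / (j + 1 : ℝ) : ℝ) : ℂ) * Complex.I).re = -(n : ℝ) := by
            simp only [Complex.add_re, Complex.neg_re, Complex.natCast_re, Complex.mul_re,
              Complex.ofReal_re, Complex.ofReal_im, Complex.I_re, Complex.I_im]
            ring
        have him : (-(n : ℂ) + ((1 / (j + 1 : ℝ) : ℝ) : ℂ) * Complex.I).im
            = 1 / (j + 1 : ℝ) := by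
            simp only [Complex.add_im, Complex.neg_im, Complex.natCast_im, Complex.mul_im,
              Complex.ofReal_re, Complex.ofReal_im, Complex.I_re, Complex.I_im]
            ring
        have hjpos : 0 < 1 / (j + 1 : ℝ) := by positivity
        constructor
        · show -(i N) < (-(n : ℂ) + ((1 / (j + 1 : ℝ) : ℝ) : ℂ) * Complex.I).re
          rw [hre]
          linarith
        · rintro ⟨m, hm⟩
          have := congrArg Complex.im hm
          rw [Complex.ofReal_im, him] at this
          linarith
      have htend : Tendsto (fun j : ℕ => (-(n : ℂ) + ((1 / (j + 1 : ℝ) : ℝ) : ℂ) * Complex.I))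
          atTop (𝓝[≠] (-(n : ℂ))) := by
        rw [tendsto_nhdsWithin_iff]
        constructor
        · have h0 : Tendsto (fun j : ℕ => (1 / (j + 1 : ℝ))) atTop (𝓝 0) :=
            tendsto_one_div_add_atTop_nhds_zero_nat
          have h1 := ((Complex.continuous_ofReal.tendsto 0).comp h0).mul_const Complex.I
          have h2 := tendsto_const_nhds (x := (-(n : ℂ))) (f := atTop (α := ℕ)) |>.add h1
          simpa using h2
        · filter_upwards with j
          intro hmem
          rw [Set.mem_singleton_iff] at hmem
          have h3 := congrArg Complex.im hmem
          have him : (-(n : ℂ) + ((1 / (j + 1 : ℝ) : ℝ) : ℂ) * Complex.I).im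
              = 1 / (j + 1 : ℝ) := by
            simp only [Complex.add_im, Complex.neg_im, Complex.natCast_im, Complex.mul_im,
              Complex.ofReal_re, Complex.ofReal_im, Complex.I_re, Complex.I_im]
            ring
          have him2 : (-(n : ℂ)).im = 0 := by simp
          rw [him, him2] at h3
          have hjpos : 0 < 1 / (j + 1 : ℝ) := by positivity
          linarith
      exact htend.frequently (Filter.Frequently.of_forall fun j => hEqV (hjV j))
    have hev : E =ᶠ[𝓝 (-(n : ℂ))] F := (hEan'.frequently_eq_iff_eventually_eq hFan').mp hfreq
    -- cancel the factor (s + n)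
    have hg12 : (fun s => Q s * Z s) =ᶠ[𝓝[≠] (-(n : ℂ))]
        (fun s => (A k : ℂ) * ψ s * Q s + (Complex.Gamma s)⁻¹ * (S2 s + Q s * G s)) := by
      have hev' := hev.filter_mono (nhdsWithin_le_nhds (s := {(-(n : ℂ))}ᶜ))
      filter_upwards [hev', self_mem_nhdsWithin] with s hs hs'
      have hsne : s + n ≠ 0 := by
        intro h0
        apply hs'
        rw [Set.mem_singleton_iff]
        linear_combination h0
      have heq := hs
      rw [hEfact s, hFfact s] at heq
      exact mul_left_cancel₀ hsne heq
    -- pass to the limit at -n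
    haveI : (𝓝[≠] (-(n : ℂ))).NeBot := Module.punctured_nhds_neBot ℝ ℂ _
    have hQcont : ContinuousAt Q (-(n : ℂ)) := by
      exact (analyticAt_cprod (fun j => ((i j : ℝ) : ℂ)) _ _).continuousAt
    have hψcont : ContinuousAt ψ (-(n : ℂ)) := by
      simp only [hψdef]
      apply ContinuousAt.mul (analyticAt_cprod _ _ _).continuousAt
      have hdiff : Differentiable ℂ (fun s : ℂ => (Complex.Gamma (s + ((n + 1 : ℕ) : ℂ)))⁻¹) :=
        Complex.differentiable_one_div_Gamma.comp (differentiable_id.add_const _)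
      exact hdiff.continuous.continuousAt
    have hS2cont : ContinuousAt S2 (-(n : ℂ)) := by
      simp only [hS2def]
      apply (analyticAt_csum _ _ _ (fun m _ => analyticAt_const.mul
        (analyticAt_cprod _ _ _))).continuousAt
    have hg1cont : ContinuousAt (fun s => Q s * Z s) (-(n : ℂ)) :=
      hQcont.mul (hZreg n).continuousAt
    have hg2cont : ContinuousAt
        (fun s => (A k : ℂ) * ψ s * Q s + (Complex.Gamma s)⁻¹ * (S2 s + Q s * G s))
        (-(n : ℂ)) := by
      apply ContinuousAt.add
      · exact (continuousAt_const.mul hψcont).mul hQcont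
      · exact ((hΓinv_an _).continuousAt).mul (hS2cont.add (hQcont.mul (hGanAt _ hnre).continuousAt))
    have heq0 : Q (-(n : ℂ)) * Z (-(n : ℂ))
        = (A k : ℂ) * ψ (-(n : ℂ)) * Q (-(n : ℂ))
          + (Complex.Gamma (-(n : ℂ)))⁻¹ * (S2 (-(n : ℂ)) + Q (-(n : ℂ)) * G (-(n : ℂ))) := by
      have l1 : Tendsto (fun s => Q s * Z s) (𝓝[≠] (-(n : ℂ)))
          (𝓝 (Q (-(n : ℂ)) * Z (-(n : ℂ)))) := hg1cont.tendsto.mono_left nhdsWithin_le_nhds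
      have l2 : Tendsto (fun s => Q s * Z s) (𝓝[≠] (-(n : ℂ)))
          (𝓝 ((A k : ℂ) * ψ (-(n : ℂ)) * Q (-(n : ℂ))
            + (Complex.Gamma (-(n : ℂ)))⁻¹ * (S2 (-(n : ℂ)) + Q (-(n : ℂ)) * G (-(n : ℂ))))) :=
        (hg2cont.tendsto.mono_left nhdsWithin_le_nhds).congr' hg12.symm
      exact tendsto_nhds_unique l1 l2
    have hΓ0 : (Complex.Gamma (-(n : ℂ)))⁻¹ = 0 := by
      rw [Complex.Gamma_neg_nat_eq_zero, inv_zero]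
    rw [hΓ0, zero_mul, add_zero] at heq0
    have hQne : Q (-(n : ℂ)) ≠ 0 := by
      simp only [hQdef]
      apply Finset.prod_ne_zero_iff.mpr
      intro j hj h0
      have hre := congrArg Complex.re h0
      simp only [Complex.add_re, Complex.neg_re, Complex.natCast_re, Complex.ofReal_re,
        Complex.zero_re] at hre
      have hij : i j = (n : ℝ) := by linarith
      have : j = k := hmono.injective (by rw [hij, hk])
      exact (Finset.ne_of_mem_erase hj) this
    have hψval : ψ (-(n : ℂ)) = (-1) ^ n * (n.factorial : ℂ) := by
      simp only [hψdef]
      have h1 : (-(n : ℂ)) + ((n + 1 : ℕ) : ℂ) = 1 := by push_cast; ring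
      rw [h1, Complex.Gamma_one, inv_one, mul_one]
      exact prod_neg_factorial n
    have hZval : Z (-(n : ℂ)) = (A k : ℂ) * ψ (-(n : ℂ)) := by
      apply mul_left_cancel₀ hQne
      rw [heq0]
      ring
    rw [hZval, hψval]
    ring
  · -- the case where n does not occur among the exponents
    intro hk
    have hmem : (-(n : ℂ)) ∈ V := by
      constructor
      · exact hnre
      · rintro ⟨m, hm⟩
        apply hk m
        have := congrArg Complex.re hm
        rw [Complex.ofReal_re] at this
        simp only [Complex.neg_re, Complex.natCast_re] at this
        linarith
    have h2 := hEqV hmem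
    simp only [hEdef, hFdef] at h2
    rw [Complex.Gamma_neg_nat_eq_zero, inv_zero, zero_mul] at h2
    have hPne : P (-(n : ℂ)) ≠ 0 := by
      simp only [hPdef]
      apply Finset.prod_ne_zero_iff.mpr
      intro m _ h0
      apply hk m
      have hre := congrArg Complex.re h0
      simp only [Complex.add_re, Complex.neg_re, Complex.natCast_re, Complex.ofReal_re,
        Complex.zero_re] at hre
      linarith
    rcases mul_eq_zero.mp h2 with h | h
    · exact absurd h hPne
    · exact h
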